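/- Fix k ∈ ℕ with k ≥ 2, let V be a finite set and R a k-uniform hypergraph on V. Then K(R) satisfies condition (†): for every (k+2)-element subset W of V, the number of (k+1)-element subsets of W that belong to K(R) is congruent to k modulo 2. -/
import Mathlib


variable {α : Type*} [DecidableEq α]

/-- `R` is a `k`-uniform hypergraph on the vertex set `V`. -/
def IsHypergraph (k : ℕ) (V : Finset α) (R : Set (Finset α)) : Prop :=
  ∀ e ∈ R, e ⊆ V ∧ e.card = k

/-- The Kay-graph of a `k`-uniform hypergraph `R` on `V`: the `(k+1)`-uniform hypergraph
on `V` whose hyperedges are the `(k+1)`-element subsets `A` of `V` such that the number of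
`k`-element subsets of `A` belonging to `R` is congruent to `k + 1` modulo `2`. -/
def kay (k : ℕ) (V : Finset α) (R : Set (Finset α)) : Set (Finset α) :=
  {A | A ⊆ V ∧ A.card = k + 1 ∧
    {e : Finset α | e ⊆ A ∧ e.card = k ∧ e ∈ R}.ncard % 2 = (k + 1) % 2}

/-- Condition (†) for a `(k+1)`-uniform hypergraph `S` on `V`: for every `(k+2)`-element
subset `W` of `V`, the number of `(k+1)`-element subsets of `W` belonging to `S` is
congruent to `k` modulo `2`. -/
def dagger (k : ℕ) (V : Finset α) (S : Set (Finset α)) : Prop :=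
  ∀ W : Finset α, W ⊆ V → W.card = k + 2 →
    {A : Finset α | A ⊆ W ∧ A.card = k + 1 ∧ A ∈ S}.ncard % 2 = k % 2

/-- The Kay-graph of a `k`-uniform hypergraph satisfies condition (†). -/
theorem kay_satisfies_dagger (k : ℕ) (hk : 2 ≤ k) (V : Finset α) (R : Set (Finset α))
    (hR : IsHypergraph k V R) : dagger k V (kay k V R) := by
  classical
  intro W hWV hW
  set g : Finset α → ℕ := fun A => ((A.powersetCard k).filter (· ∈ R)).card with hg
  set P := W.powersetCard (k+1) with hP
  set E := (W.powersetCard k).filter (· ∈ R) with hE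
  -- membership in kay for subsets of W
  have key : ∀ A : Finset α, A ⊆ W →
      (A ∈ kay k V R ↔ A.card = k + 1 ∧ g A % 2 = (k + 1) % 2) := by
    intro A hA
    have hAV : A ⊆ V := hA.trans hWV
    have hs : {e : Finset α | e ⊆ A ∧ e.card = k ∧ e ∈ R}
        = ↑((A.powersetCard k).filter (· ∈ R)) := by
      ext e
      simp only [Set.mem_setOf_eq, Finset.coe_filter, Finset.mem_powersetCard]
      tauto
    constructor
    · rintro ⟨_, h2, h3⟩
      rw [hs, Set.ncard_coe_finset] at h3
      exact ⟨h2, h3⟩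
    · rintro ⟨h2, h3⟩
      refine ⟨hAV, h2, ?_⟩
      rw [hs, Set.ncard_coe_finset]
      exact h3
  have hmain : {A : Finset α | A ⊆ W ∧ A.card = k + 1 ∧ A ∈ kay k V R}
      = ↑(P.filter (fun A => g A % 2 = (k + 1) % 2)) := by
    ext A
    simp only [Set.mem_setOf_eq, Finset.coe_filter, Finset.mem_powersetCard, hP,
      Set.mem_setOf_eq]
    constructor
    · rintro ⟨h1, h2, h3⟩
      exact ⟨⟨h1, h2⟩, ((key A h1).1 h3).2⟩
    · rintro ⟨⟨h1, h2⟩, h3⟩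
      exact ⟨h1, h2, (key A h1).2 ⟨h2, h3⟩⟩
  rw [hmain, Set.ncard_coe_finset]
  -- g A = number of edges of E contained in A
  have hgE : ∀ A ∈ P, g A = (E.filter (· ⊆ A)).card := by
    intro A hA
    rw [hP, Finset.mem_powersetCard] at hA
    rw [hg]
    have hEq : (A.powersetCard k).filter (· ∈ R) = E.filter (· ⊆ A) := by
      ext e
      simp only [Finset.mem_filter, Finset.mem_powersetCard, hE]
      constructor
      · rintro ⟨⟨he, hc⟩, hr⟩
        exact ⟨⟨⟨he.trans hA.1, hc⟩, hr⟩, he⟩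
      · rintro ⟨⟨⟨_, hc⟩, hr⟩, he⟩
        exact ⟨⟨he, hc⟩, hr⟩
    exact congrArg Finset.card hEq
  -- each e ∈ E is contained in exactly two elements of P
  have htwo : ∀ e ∈ E, (P.filter (fun A => e ⊆ A)).card = 2 := by
    intro e he
    rw [hE, Finset.mem_filter, Finset.mem_powersetCard] at he
    obtain ⟨⟨heW, hec⟩, _⟩ := he
    have himg : P.filter (fun A => e ⊆ A) = (W \ e).image (fun x => insert x e) := by
      ext A
      simp only [Finset.mem_filter, Finset.mem_image, Finset.mem_sdiff,
        Finset.mem_powersetCard, hP]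
      constructor
      · rintro ⟨⟨hAW, hAc⟩, heA⟩
        have h1 : (A \ e).card = 1 := by
          rw [Finset.card_sdiff_of_subset heA, hAc, hec]; omega
        obtain ⟨x, hx⟩ := Finset.card_eq_one.1 h1
        have hxA : x ∈ A \ e := hx ▸ Finset.mem_singleton_self x
        rw [Finset.mem_sdiff] at hxA
        refine ⟨x, ⟨hAW hxA.1, hxA.2⟩, ?_⟩
        apply Finset.eq_of_subset_of_card_le
        · intro y hy
          rcases Finset.mem_insert.1 hy with h | h
          · exact h ▸ hxA.1
          · exact heA h
        · rw [hAc, Finset.card_insert_of_notMem hxA.2, hec]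
      · rintro ⟨x, ⟨hxW, hxe⟩, rfl⟩
        refine ⟨⟨?_, ?_⟩, Finset.subset_insert x e⟩
        · exact Finset.insert_subset hxW heW
        · rw [Finset.card_insert_of_notMem hxe, hec]
    rw [himg, Finset.card_image_of_injOn, Finset.card_sdiff_of_subset heW, hW, hec]
    · omega
    · intro x hx y hy hxy
      rw [Finset.mem_coe, Finset.mem_sdiff] at hx hy
      have hxy' : insert x e = insert y e := hxy
      have : x ∈ insert y e := hxy' ▸ Finset.mem_insert_self x e
      rcases Finset.mem_insert.1 this with h | h
      · exact h
      · exact absurd h hx.2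
  -- double counting
  have hsum : ∑ A ∈ P, g A = 2 * E.card := by
    calc ∑ A ∈ P, g A = ∑ A ∈ P, (E.filter (· ⊆ A)).card :=
          Finset.sum_congr rfl hgE
      _ = ∑ A ∈ P, ∑ e ∈ E, if e ⊆ A then 1 else 0 := by
          refine Finset.sum_congr rfl fun A _ => ?_
          rw [Finset.card_filter]
      _ = ∑ e ∈ E, ∑ A ∈ P, if e ⊆ A then 1 else 0 := Finset.sum_comm
      _ = ∑ e ∈ E, (P.filter (fun A => e ⊆ A)).card := by
          refine Finset.sum_congr rfl fun e _ => ?_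
          rw [Finset.card_filter]
      _ = ∑ e ∈ E, 2 := Finset.sum_congr rfl htwo
      _ = 2 * E.card := by rw [Finset.sum_const, smul_eq_mul, mul_comm]
  -- hence the number of A with odd g A is even
  have hodd : (P.filter (fun A => g A % 2 = 1)).card % 2 = 0 := by
    have h1 : (∑ A ∈ P, g A) % 2 = (∑ A ∈ P, g A % 2) % 2 := Finset.sum_nat_mod _ _ _
    have h2 : ∑ A ∈ P, g A % 2 = ∑ A ∈ P, (if g A % 2 = 1 then 1 else 0) := by
      refine Finset.sum_congr rfl fun A _ => ?_
      have := Nat.mod_lt (g A) (show 0 < 2 by norm_num)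
      split <;> omega
    have h3 : (P.filter (fun A => g A % 2 = 1)).card
        = ∑ A ∈ P, (if g A % 2 = 1 then 1 else 0) := Finset.card_filter _ _
    rw [hsum] at h1
    omega
  have hPcard : P.card = k + 2 := by
    rw [hP, Finset.card_powersetCard, hW, Nat.choose_succ_self_right]
  rcases Nat.mod_two_eq_zero_or_one k with hke | hko
  · have h1 : (k + 1) % 2 = 1 := by omega
    rw [h1, hke]
    exact hodd
  · have h1 : (k + 1) % 2 = 0 := by omega
    rw [h1]
    have hfe : P.filter (fun A => g A % 2 = 1) = P.filter (fun A => ¬ g A % 2 = 0) := by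
      apply Finset.filter_congr
      intro A _
      omega
    have hcompl : (P.filter (fun A => g A % 2 = 0)).card
        + (P.filter (fun A => g A % 2 = 1)).card = P.card := by
      rw [hfe]
      exact Finset.card_filter_add_card_filter_not (p := fun A => g A % 2 = 0)
    have hle := Finset.card_filter_le P (fun A => g A % 2 = 1)
    rw [hPcard] at hcompl
    omega
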